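/- The Fourier transform of the Matérn covariance function C(h) = (2^{1−ν} φ² / ((4π)^{d/2} Γ(ν + d/2) κ^{2ν})) (κ‖h‖)^ν K_ν(κ‖h‖) on ℝ^d equals the spectral density S(k) = (φ²/(2π)^d) (κ² + ‖k‖²)^{−(ν + d/2)}. -/

import Mathlib

open MeasureTheory Real Set
open Complex

noncomputable def besselK (ν x : ℝ) : ℝ :=
  ∫ t in Ioi (0 : ℝ), Real.exp (-x * Real.cosh t) * Real.cosh (ν * t)

-- integrability of the key integrand
lemma intg (ν : ℝ) (hν : 0 < ν) (c : ℝ) (hc : 0 < c) :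
    IntegrableOn (fun u : ℝ => u ^ (ν - 1) * rexp (-u - c / u)) (Ioi 0) := by
  refine Integrable.mono (Real.GammaIntegral_convergent hν)
    ?_ ?_
  · apply Measurable.aestronglyMeasurable
    fun_prop
  · filter_upwards [ae_restrict_mem measurableSet_Ioi] with u hu
    have hu0 : (0:ℝ) < u := hu
    rw [Real.norm_eq_abs, Real.norm_eq_abs, _root_.abs_of_nonneg (by positivity),
      _root_.abs_of_nonneg (by positivity)]
    rw [mul_comm (rexp (-u))]
    gcongr
    have : -u - c/u ≤ -u := by
      have : 0 < c / u := by positivity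
      linarith
    exact this

lemma image_exp (c : ℝ) (hc : 0 < c) : (fun t : ℝ => c * rexp t) '' univ = Ioi 0 := by
  ext y
  simp only [image_univ, mem_range, mem_Ioi]
  constructor
  · rintro ⟨t, rfl⟩; positivity
  · intro hy
    exact ⟨Real.log (y / c), by rw [Real.exp_log (by positivity)]; field_simp⟩

lemma besselK_int_rep (ν x : ℝ) (hν : 0 < ν) (hx : 0 < x) :
    ∫ u in Ioi (0:ℝ), u ^ (ν - 1) * rexp (-u - x^2/4 / u)
      = 2 * (x/2) ^ ν * besselK ν x := by
  set c : ℝ := x / 2 with hcdef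
  have hc : 0 < c := by positivity
  set g : ℝ → ℝ := fun u => u ^ (ν - 1) * rexp (-u - x^2/4 / u) with hg
  have hderiv : ∀ t ∈ (univ : Set ℝ), HasDerivWithinAt (fun t : ℝ => c * rexp t)
      (c * rexp t) univ t := fun t _ =>
    ((Real.hasDerivAt_exp t).const_mul c).hasDerivWithinAt
  have hinj : InjOn (fun t : ℝ => c * rexp t) univ := by
    intro a _ b _ hab
    simpa [hc.ne', Real.exp_eq_exp] using hab
  have key := integral_image_eq_integral_abs_deriv_smul MeasurableSet.univ hderiv hinj g
  rw [image_exp c hc] at key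
  -- pointwise identity for the transformed integrand
  have hpt : ∀ t : ℝ, |c * rexp t| • g (c * rexp t)
      = c ^ ν * (rexp (-x * Real.cosh t) * rexp (ν * t)) := by
    intro t
    have h1 : (0:ℝ) < c * rexp t := by positivity
    have h2 : (c * rexp t) ^ (ν - 1) = c ^ (ν-1) * rexp ((ν-1) * t) := by
      rw [Real.mul_rpow hc.le (Real.exp_pos t).le, ← Real.exp_mul, mul_comm t]
    have h3 : -(c * rexp t) - x^2/4 / (c * rexp t) = -x * Real.cosh t := by
      have : x^2/4 = c * c := by rw [hcdef]; ring
      rw [this, Real.cosh_eq]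
      rw [Real.exp_neg]
      field_simp
      ring
    rw [smul_eq_mul, abs_of_pos h1, hg]
    simp only [h2, h3, Real.rpow_sub hc, Real.rpow_one, sub_one_mul, Real.exp_sub]
    have := (Real.exp_pos t).ne'
    field_simp
  rw [key]
  rw [Measure.restrict_univ]
  calc ∫ t : ℝ, |c * rexp t| • g (c * rexp t)
      = ∫ t : ℝ, c ^ ν * (rexp (-x * Real.cosh t) * rexp (ν * t)) := by
        exact integral_congr_ae (Filter.Eventually.of_forall hpt)
    _ = c ^ ν * ∫ t : ℝ, rexp (-x * Real.cosh t) * rexp (ν * t) := integral_const_mul _ _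
    _ = 2 * c ^ ν * besselK ν x := by
        have hFint : Integrable (fun t : ℝ => rexp (-x * Real.cosh t) * rexp (ν * t)) := by
          have := (integrableOn_image_iff_integrableOn_abs_deriv_smul
            MeasurableSet.univ hderiv hinj g).1 (by rw [image_exp c hc]; exact intg ν hν _ (by positivity))
          rw [integrableOn_univ] at this
          have h2 : Integrable (fun t : ℝ => c ^ ν * (rexp (-x * Real.cosh t) * rexp (ν * t))) := by
            exact this.congr (Filter.Eventually.of_forall hpt)
          have := h2.const_mul (c ^ ν)⁻¹
          refine this.congr (Filter.Eventually.of_forall fun t => ?_)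
          have : (c:ℝ) ^ ν ≠ 0 := by positivity
          field_simp
        have hneg : Integrable (fun t : ℝ => rexp (-x * Real.cosh (-t)) * rexp (ν * (-t))) :=
          hFint.comp_neg
        have hsplit := intervalIntegral.integral_Iic_add_Ioi (b := (0:ℝ))
          hFint.integrableOn hFint.integrableOn (μ := volume)
        have hIic : ∫ t in Iic (0:ℝ), rexp (-x * Real.cosh t) * rexp (ν * t)
            = ∫ t in Ioi (0:ℝ), rexp (-x * Real.cosh (-t)) * rexp (ν * (-t)) := by
          have h0 := integral_comp_neg_Iic (0:ℝ) (fun t => rexp (-x * Real.cosh (-t)) * rexp (ν * (-t)))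
          simp only [neg_neg, neg_zero] at h0
          exact h0
        have : ∫ t : ℝ, rexp (-x * Real.cosh t) * rexp (ν * t) = 2 * besselK ν x := by
          rw [← hsplit, hIic, ← integral_add hneg.integrableOn hFint.integrableOn]
          rw [besselK, ← integral_const_mul]
          refine setIntegral_congr_fun measurableSet_Ioi fun t _ => ?_
          rw [Real.cosh_neg, show ν * -t = -(ν*t) by ring, Real.cosh_eq (ν * t)]
          ring
        rw [this]
        ring

/-- The Matérn covariance function in dimension `d` with shape `ν`,
variance parameter `φ2` (denoted `φ²` in the paper) and scale `κ`. -/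
noncomputable def maternCov (d : ℕ) (ν φ2 κ : ℝ) (h : EuclideanSpace ℝ (Fin d)) : ℝ :=
  2 ^ (1 - ν) * φ2 / ((4 * π) ^ ((d : ℝ) / 2) * Real.Gamma (ν + d / 2) * κ ^ (2 * ν)) *
    (κ * ‖h‖) ^ ν * besselK ν (κ * ‖h‖)

variable {d : ℕ} (k : EuclideanSpace ℝ (Fin d))

-- Gaussian Fourier integral over EuclideanSpace, for fixed u > 0
lemma gauss_int (κ : ℝ) (hκ : 0 < κ) (u : ℝ) (hu : 0 < u) (k : EuclideanSpace ℝ (Fin d)) :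
    ∫ h : EuclideanSpace ℝ (Fin d),
        Complex.exp (-((κ^2/(4*u) : ℝ) : ℂ) * (‖h‖:ℂ)^2 + (-Complex.I) * ((inner ℝ k h : ℝ) : ℂ))
      = ((4*π*u/κ^2) ^ ((d:ℝ)/2) * rexp (-(‖k‖^2/κ^2) * u) : ℝ) := by
  have hb : (0:ℝ) < κ^2/(4*u) := by positivity
  have := GaussianFourier.integral_cexp_neg_mul_sq_norm_add (V := EuclideanSpace ℝ (Fin d))
    (b := ((κ^2/(4*u) : ℝ) : ℂ)) (by rw [Complex.ofReal_re]; exact hb) (-Complex.I) k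
  rw [finrank_euclideanSpace_fin] at this
  rw [this]
  have h1 : ((π : ℂ) / ((κ^2/(4*u) : ℝ) : ℂ)) = ((4*π*u/κ^2 : ℝ) : ℂ) := by
    push_cast
    field_simp
  have h2 : (-Complex.I)^2 * (‖k‖:ℂ)^2 / (4 * ((κ^2/(4*u) : ℝ) : ℂ)) = ((-(‖k‖^2/κ^2) * u : ℝ) : ℂ) := by
    have : (-Complex.I)^2 = -1 := by simp [pow_two]
    rw [this]
    push_cast
    have hκ' : (κ:ℂ) ≠ 0 := by exact_mod_cast hκ.ne'
    have hu' : (u:ℂ) ≠ 0 := by exact_mod_cast hu.ne'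
    field_simp
  rw [h1, h2, show ((d:ℂ)/2) = (((d:ℝ)/2 : ℝ) : ℂ) by push_cast; ring,
    ← Complex.ofReal_cpow (by positivity), ← Complex.ofReal_exp, ← Complex.ofReal_mul]

variable (ν κ : ℝ)

noncomputable def Phi (k : EuclideanSpace ℝ (Fin d)) (u : ℝ) (h : EuclideanSpace ℝ (Fin d)) : ℂ :=
  ((u ^ (ν-1) * rexp (-u) : ℝ) : ℂ) *
    Complex.exp (-((κ^2/(4*u) : ℝ) : ℂ) * (‖h‖:ℂ)^2 + (-Complex.I) * ((inner ℝ k h : ℝ) : ℂ))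

lemma norm_Phi (u : ℝ) (hu : 0 < u) (h : EuclideanSpace ℝ (Fin d)) :
    ‖Phi ν κ k u h‖ = u ^ (ν-1) * rexp (-u) * rexp (-(κ^2/(4*u)) * ‖h‖^2) := by
  have hre : (-((κ^2/(4*u) : ℝ) : ℂ) * (‖h‖:ℂ)^2 + (-Complex.I) * ((inner ℝ k h : ℝ) : ℂ)).re
      = -(κ^2/(4*u)) * ‖h‖^2 := by
    have h0 : ((-Complex.I) * ((inner ℝ k h : ℝ) : ℂ)).re = 0 := by simp
    rw [show -((κ^2/(4*u) : ℝ) : ℂ) * (‖h‖:ℂ)^2 = ((-(κ^2/(4*u)) * ‖h‖^2 : ℝ) : ℂ) by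
      push_cast; ring, Complex.add_re, Complex.ofReal_re, h0, add_zero]
  rw [Phi, norm_mul, Complex.norm_real, Real.norm_eq_abs,
    _root_.abs_of_nonneg (mul_nonneg (Real.rpow_nonneg hu.le _) (Real.exp_pos _).le),
    Complex.norm_exp, hre]

lemma meas_Phi : AEStronglyMeasurable (Function.uncurry (Phi (d := d) ν κ k))
    (((volume : Measure ℝ).restrict (Ioi 0)).prod volume) := by
  apply Measurable.aestronglyMeasurable
  unfold Function.uncurry Phi
  have m1 : Measurable fun p : ℝ × (EuclideanSpace ℝ (Fin d)) => p.1 ^ (ν-1) * rexp (-p.1) :=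
    (measurable_fst.pow_const _).mul (Real.measurable_exp.comp measurable_fst.neg)
  have m2 : Measurable fun p : ℝ × (EuclideanSpace ℝ (Fin d)) => (inner ℝ k p.2 : ℝ) :=
    (Continuous.inner continuous_const continuous_id).measurable.comp measurable_snd
  have m3 : Measurable fun p : ℝ × (EuclideanSpace ℝ (Fin d)) => κ^2/(4*p.1) :=
    measurable_const.div (measurable_fst.const_mul 4)
  exact (Complex.measurable_ofReal.comp m1).mul (Complex.measurable_exp.comp
    ((((Complex.measurable_ofReal.comp m3).neg).mul
      (((Complex.measurable_ofReal.comp measurable_snd.norm)).pow_const 2)).add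
      (((Complex.measurable_ofReal.comp m2)).const_mul (-Complex.I))))

lemma integrable_Phi (hν : 0 < ν) (hκ : 0 < κ) :
    Integrable (Function.uncurry (Phi (d := d) ν κ k))
      (((volume : Measure ℝ).restrict (Ioi 0)).prod volume) := by
  rw [integrable_prod_iff (meas_Phi k ν κ)]
  constructor
  · filter_upwards [ae_restrict_mem measurableSet_Ioi] with u hu
    have hu0 : (0:ℝ) < u := hu
    have hb : (0:ℝ) < κ^2/(4*u) := by positivity
    have := (GaussianFourier.integrable_cexp_neg_mul_sq_norm_add
      (V := EuclideanSpace ℝ (Fin d)) (b := ((κ^2/(4*u) : ℝ) : ℂ))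
      (by rw [Complex.ofReal_re]; exact hb) (-Complex.I) k)
    simpa [Function.uncurry, Phi] using this.const_mul ((u ^ (ν-1) * rexp (-u) : ℝ) : ℂ)
  · have heq : ∀ᵐ u ∂(volume : Measure ℝ).restrict (Ioi 0),
        (∫ h : EuclideanSpace ℝ (Fin d), ‖Phi (d := d) ν κ k u h‖)
          = (4*π/κ^2) ^ ((d:ℝ)/2) * (rexp (-u) * u ^ (ν + (d:ℝ)/2 - 1)) := by
      filter_upwards [ae_restrict_mem measurableSet_Ioi] with u hu
      have hu0 : (0:ℝ) < u := hu
      have hb : (0:ℝ) < κ^2/(4*u) := by positivity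
      calc (∫ h : EuclideanSpace ℝ (Fin d), ‖Phi (d := d) ν κ k u h‖)
          = ∫ h : EuclideanSpace ℝ (Fin d),
              u ^ (ν-1) * rexp (-u) * rexp (-(κ^2/(4*u)) * ‖h‖^2) :=
            integral_congr_ae (Filter.Eventually.of_forall fun h => norm_Phi k ν κ u hu0 h)
        _ = u ^ (ν-1) * rexp (-u) * ∫ h : EuclideanSpace ℝ (Fin d),
              rexp (-(κ^2/(4*u)) * ‖h‖^2) := integral_const_mul _ _
        _ = u ^ (ν-1) * rexp (-u) * (π / (κ^2/(4*u))) ^ ((d:ℝ)/2) := by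
            rw [GaussianFourier.integral_rexp_neg_mul_sq_norm hb, finrank_euclideanSpace_fin]
        _ = (4*π/κ^2) ^ ((d:ℝ)/2) * (rexp (-u) * u ^ (ν + (d:ℝ)/2 - 1)) := by
            rw [show π / (κ^2/(4*u)) = (4*π/κ^2) * u by field_simp,
              Real.mul_rpow (by positivity) hu0.le,
              show ν + (d:ℝ)/2 - 1 = (ν - 1) + (d:ℝ)/2 by ring,
              Real.rpow_add hu0]
            ring
    have hs : (0:ℝ) < ν + (d:ℝ)/2 := by
      have : (0:ℝ) ≤ (d:ℝ)/2 := by positivity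
      linarith
    exact Integrable.congr ((Real.GammaIntegral_convergent hs).const_mul
      ((4*π/κ^2) ^ ((d:ℝ)/2))) (heq.mono fun u hu => hu.symm)

lemma int_Phi (hν : 0 < ν) (hκ : 0 < κ) :
    ∫ h : EuclideanSpace ℝ (Fin d), ∫ u in Ioi (0:ℝ), Phi ν κ k u h
      = (((4*π/κ^2) ^ ((d:ℝ)/2) *
          ((1 + ‖k‖^2/κ^2) ^ (-(ν + (d:ℝ)/2)) * Real.Gamma (ν + (d:ℝ)/2)) : ℝ) : ℂ) := by
  rw [← MeasureTheory.integral_integral_swap (integrable_Phi k ν κ hν hκ)]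
  have hB : (0:ℝ) < 1 + ‖k‖^2/κ^2 := by positivity
  have hstep : ∀ u ∈ Ioi (0:ℝ), (∫ h : EuclideanSpace ℝ (Fin d), Phi ν κ k u h)
      = (((4*π/κ^2) ^ ((d:ℝ)/2) *
          (u ^ (ν + (d:ℝ)/2 - 1) * rexp (-(1 + ‖k‖^2/κ^2) * u ^ (1:ℝ))) : ℝ) : ℂ) := by
    intro u hu
    have hu0 : (0:ℝ) < u := hu
    rw [show (fun h : EuclideanSpace ℝ (Fin d) => Phi ν κ k u h) = fun h =>
      ((u ^ (ν-1) * rexp (-u) : ℝ) : ℂ) *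
        Complex.exp (-((κ^2/(4*u) : ℝ) : ℂ) * (‖h‖:ℂ)^2 + (-Complex.I) * ((inner ℝ k h : ℝ) : ℂ))
      from rfl]
    rw [integral_const_mul, gauss_int κ hκ u hu0 k, ← Complex.ofReal_mul]
    congr 1
    rw [show (4*π*u/κ^2) = (4*π/κ^2) * u by ring,
      Real.mul_rpow (by positivity) hu0.le, Real.rpow_one,
      show ν + (d:ℝ)/2 - 1 = (ν - 1) + (d:ℝ)/2 by ring, Real.rpow_add hu0,
      show -(1 + ‖k‖^2/κ^2) * u = -u + -(‖k‖^2/κ^2) * u by ring, Real.exp_add]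
    ring
  rw [setIntegral_congr_fun measurableSet_Ioi hstep]
  rw [show (∫ x in Ioi (0:ℝ), (((4*π/κ^2) ^ ((d:ℝ)/2) *
        (x ^ (ν + (d:ℝ)/2 - 1) * rexp (-(1 + ‖k‖^2/κ^2) * x ^ (1:ℝ))) : ℝ) : ℂ))
      = ((∫ x in Ioi (0:ℝ), (4*π/κ^2) ^ ((d:ℝ)/2) *
        (x ^ (ν + (d:ℝ)/2 - 1) * rexp (-(1 + ‖k‖^2/κ^2) * x ^ (1:ℝ))) : ℝ) : ℂ)
      from integral_ofReal]
  congr 1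
  have hq : (-1:ℝ) < ν + (d:ℝ)/2 - 1 := by
    have : (0:ℝ) ≤ (d:ℝ)/2 := by positivity
    linarith
  rw [integral_const_mul, integral_rpow_mul_exp_neg_mul_rpow one_pos hq hB]
  norm_num

lemma maternCov_rep (d : ℕ) (φ2 : ℝ) (hν : 0 < ν) (hκ : 0 < κ)
    (h : EuclideanSpace ℝ (Fin d)) (hh : h ≠ 0) :
    maternCov d ν φ2 κ h
      = φ2 / ((4 * π) ^ ((d : ℝ) / 2) * Real.Gamma (ν + d / 2) * κ ^ (2 * ν)) *
        ∫ u in Ioi (0:ℝ), u ^ (ν - 1) * rexp (-u - (κ*‖h‖)^2/4 / u) := by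
  have hx : 0 < κ * ‖h‖ := by
    have := norm_pos_iff.mpr hh
    positivity
  rw [maternCov, besselK_int_rep ν (κ*‖h‖) hν hx]
  have h2ν : (0:ℝ) < (2:ℝ) ^ ν := Real.rpow_pos_of_pos two_pos ν
  rw [show ((2:ℝ)) ^ (1 - ν) = 2 / 2 ^ ν by
      rw [Real.rpow_sub two_pos, Real.rpow_one],
    Real.div_rpow (by positivity) (by norm_num)]
  field_simp

lemma pointwise_eq (d : ℕ) (φ2 : ℝ) (hν : 0 < ν) (hκ : 0 < κ)
    (k h : EuclideanSpace ℝ (Fin d)) (hh : h ≠ 0) :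
    (maternCov d ν φ2 κ h : ℂ) * Complex.exp (-Complex.I * ((inner ℝ k h : ℝ) : ℂ))
      = ((φ2 / ((4 * π) ^ ((d : ℝ) / 2) * Real.Gamma (ν + d / 2) * κ ^ (2 * ν)) : ℝ) : ℂ) *
        ∫ u in Ioi (0:ℝ), Phi ν κ k u h := by
  rw [maternCov_rep ν κ d φ2 hν hκ h hh, Complex.ofReal_mul, mul_assoc]
  congr 1
  rw [show ((∫ u in Ioi (0:ℝ), u ^ (ν-1) * rexp (-u - (κ*‖h‖)^2/4/u) : ℝ) : ℂ)
      = ∫ u in Ioi (0:ℝ), ((u ^ (ν-1) * rexp (-u - (κ*‖h‖)^2/4/u) : ℝ) : ℂ)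
      from integral_ofReal.symm]
  rw [← integral_mul_const]
  refine setIntegral_congr_fun measurableSet_Ioi fun u hu => ?_
  have hu0 : (0:ℝ) < u := hu
  unfold Phi
  have e1 : (κ*‖h‖)^2/4/u = (κ^2/(4*u)) * ‖h‖^2 := by
    field_simp
  rw [e1, show -u - (κ^2/(4*u)) * ‖h‖^2 = -u + (-(κ^2/(4*u) * ‖h‖^2)) by ring, Real.exp_add,
    Complex.exp_add,
    show -((κ^2/(4*u) : ℝ) : ℂ) * (‖h‖:ℂ)^2 = ((-(κ^2/(4*u) * ‖h‖^2) : ℝ) : ℂ) by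
      push_cast; ring,
    ← Complex.ofReal_exp]
  push_cast
  ring

/-- The Fourier transform `F(C)(k) = (2π)^{−d} ∫ C(h) e^{−i⟨k,h⟩} dh` of the
Matérn covariance function equals the spectral density
`S(k) = (φ²/(2π)^d)(κ² + ‖k‖²)^{−(ν+d/2)}`. -/
theorem maternCov_fourierTransform (d : ℕ) (hd : 0 < d) (ν φ κ : ℝ)
    (hν : 0 < ν) (hφ : 0 < φ) (hκ : 0 < κ) (k : EuclideanSpace ℝ (Fin d)) :
    (2 * π : ℂ) ^ (-(d : ℤ)) *
        ∫ h : EuclideanSpace ℝ (Fin d),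
          (maternCov d ν (φ ^ 2) κ h : ℂ) * Complex.exp (-Complex.I * (inner ℝ k h : ℝ))
      = ((φ ^ 2 / (2 * π) ^ (d : ℝ) * (κ ^ 2 + ‖k‖ ^ 2) ^ (-(ν + d / 2)) : ℝ) : ℂ) := by
  haveI : Nonempty (Fin d) := ⟨⟨0, hd⟩⟩
  have hnull : (volume : Measure (EuclideanSpace ℝ (Fin d))) {0} = 0 := measure_singleton 0
  have hae : ∀ᵐ h : EuclideanSpace ℝ (Fin d), h ≠ 0 := by
    refine MeasureTheory.ae_iff.mpr ?_
    convert hnull using 2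
    ext h
    simp
  have hcongr : ∫ h : EuclideanSpace ℝ (Fin d),
        (maternCov d ν (φ^2) κ h : ℂ) * Complex.exp (-Complex.I * (inner ℝ k h : ℝ))
      = ∫ h : EuclideanSpace ℝ (Fin d),
          ((φ^2 / ((4 * π) ^ ((d : ℝ) / 2) * Real.Gamma (ν + d / 2) * κ ^ (2 * ν)) : ℝ) : ℂ) *
            ∫ u in Ioi (0:ℝ), Phi ν κ k u h := by
    refine integral_congr_ae ?_
    filter_upwards [hae] with h hh
    exact pointwise_eq ν κ d (φ^2) hν hκ k h hh
  rw [hcongr, integral_const_mul, int_Phi k ν κ hν hκ]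
  rw [show (2 * π : ℂ) = ((2*π : ℝ) : ℂ) by push_cast; ring, ← Complex.ofReal_zpow,
    ← Complex.ofReal_mul, ← Complex.ofReal_mul, Complex.ofReal_inj]
  have hΓ : (0:ℝ) < Real.Gamma (ν + (d:ℝ)/2) :=
    Real.Gamma_pos_of_pos (by positivity)
  have hpow : ∀ x : ℝ, ((κ:ℝ)^2) ^ x = κ ^ (2*x) := fun x => by
    rw [show (κ:ℝ)^2 = κ ^ (2:ℝ) by rw [← Real.rpow_natCast κ 2]; norm_num,
      ← Real.rpow_mul hκ.le]
  have h2π : (0:ℝ) < (2*π) ^ ((d:ℝ)) := Real.rpow_pos_of_pos (by positivity) _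
  have h4π : (0:ℝ) < (4*π) ^ ((d:ℝ)/2) := Real.rpow_pos_of_pos (by positivity) _
  have hκν : (0:ℝ) < κ ^ (2*ν) := Real.rpow_pos_of_pos hκ _
  have hκd : (0:ℝ) < κ ^ ((d:ℝ)) := Real.rpow_pos_of_pos hκ _
  have hks : (0:ℝ) < (κ^2 + ‖k‖^2) ^ (-(ν + (d:ℝ)/2)) := Real.rpow_pos_of_pos (by positivity) _
  rw [show ((2*π:ℝ)) ^ (-(d:ℤ)) = ((2*π) ^ ((d:ℝ)))⁻¹ by
      rw [zpow_neg, zpow_natCast, Real.rpow_natCast],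
    Real.div_rpow (by positivity) (by positivity : (0:ℝ) ≤ κ^2),
    show (1:ℝ) + ‖k‖^2/κ^2 = (κ^2+‖k‖^2)/κ^2 by field_simp,
    Real.div_rpow (by positivity) (by positivity : (0:ℝ) ≤ κ^2),
    hpow, hpow, show 2*((d:ℝ)/2) = (d:ℝ) by ring,
    show (2:ℝ) * -(ν+(d:ℝ)/2) = -(2*ν + (d:ℝ)) by ring,
    Real.rpow_neg hκ.le (2*ν + (d:ℝ)), Real.rpow_add hκ]
  field_simp
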